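/- Let X = {x_1,...,x_n} ⊂ ℝ² with 2-centroids M_j, and suppose the minimiser s* of P(s) = Σ_i ‖s-x_i‖² + max_i ‖s-x_i‖² satisfies ‖s* - x_j‖ > ‖s* - x_i‖ for all i ≠ j (strict farthest point). Then s* = M_j and x_j is a point of X farthest from the centroid M. -/

import Mathlib

open scoped RealInnerProductSpace

set_option maxHeartbeats 1000000 in
/-- If the quadratic min-power centre `s*` has a unique (strict) farthest point `x_j`,
then `s* = M_j` and `x_j` is a farthest point of `X` from the centroid `M`. -/
theorem strict_farthest_implies_centre_is_Mj
    {n : ℕ} [NeZero n] (x : Fin n → EuclideanSpace ℝ (Fin 2))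
    (M : EuclideanSpace ℝ (Fin 2)) (hM : M = (n : ℝ)⁻¹ • ∑ i, x i)
    (Mc : Fin n → EuclideanSpace ℝ (Fin 2))
    (hMc : ∀ j, Mc j = ((n : ℝ) + 1)⁻¹ • (x j + ∑ i, x i))
    (P : EuclideanSpace ℝ (Fin 2) → ℝ)
    (hP : ∀ s, P s = (∑ i, ‖s - x i‖ ^ 2) +
      Finset.univ.sup' Finset.univ_nonempty (fun i => ‖s - x i‖ ^ 2))
    (s : EuclideanSpace ℝ (Fin 2)) (hs : ∀ t, P s ≤ P t)
    (j : Fin n) (hstrict : ∀ i, i ≠ j → ‖s - x i‖ < ‖s - x j‖) :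
    s = Mc j ∧ ∀ i, ‖M - x i‖ ≤ ‖M - x j‖ := by
  have hn0 : (n : ℝ) ≠ 0 := Nat.cast_ne_zero.mpr (NeZero.ne n)
  have hn1 : (1 : ℝ) ≤ (n : ℝ) := by exact_mod_cast Nat.one_le_iff_ne_zero.mpr (NeZero.ne n)
  have hnp : (0 : ℝ) < (n : ℝ) + 1 := by linarith
  -- sup' equals the value at j when j is farthest
  have supEq : ∀ t : EuclideanSpace ℝ (Fin 2), (∀ i, ‖t - x i‖ ≤ ‖t - x j‖) →
      (Finset.univ.sup' Finset.univ_nonempty (fun i => ‖t - x i‖ ^ 2)) = ‖t - x j‖ ^ 2 := by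
    intro t ht
    refine le_antisymm (Finset.sup'_le _ _ fun i _ => ?_)
      (Finset.le_sup' (fun i => ‖t - x i‖ ^ 2) (Finset.mem_univ j))
    exact pow_le_pow_left₀ (norm_nonneg _) (ht i) 2
  have hPs : P s = (∑ i, ‖s - x i‖ ^ 2) + ‖s - x j‖ ^ 2 := by
    rw [hP, supEq s]
    intro i
    rcases eq_or_ne i j with h | h
    · rw [h]
    · exact (hstrict i h).le
  -- expansion of squared norms along a perturbation
  have expand : ∀ (ε : ℝ) (d : EuclideanSpace ℝ (Fin 2)) (i : Fin n),
      ‖s + ε • d - x i‖ ^ 2 = ‖s - x i‖ ^ 2 + 2 * ε * ⟪s - x i, d⟫ + ε ^ 2 * ‖d‖ ^ 2 := by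
    intro ε d i
    have h : s + ε • d - x i = (s - x i) + ε • d := by abel
    rw [h, norm_add_sq_real, real_inner_smul_right, norm_smul, Real.norm_eq_abs, mul_pow,
      sq_abs]
    ring
  -- key: s = Mc j
  have key : s = Mc j := by
    by_contra hne
    set d : EuclideanSpace ℝ (Fin 2) := Mc j - s with hd
    have hdne : d ≠ 0 := sub_ne_zero.mpr (Ne.symm hne)
    have hdpos : 0 < ‖d‖ ^ 2 := pow_pos (norm_pos_iff.mpr hdne) 2
    set b : Fin n → ℝ := fun i => ‖s - x j‖ ^ 2 - ‖s - x i‖ ^ 2 with hb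
    set a : Fin n → ℝ := fun i => 2 * ⟪x i - x j, d⟫ with ha
    have hbpos : ∀ i, i ≠ j → 0 < b i := by
      intro i hi
      have := pow_lt_pow_left₀ (hstrict i hi) (norm_nonneg _) (two_ne_zero)
      simp only [hb]; linarith
    set e : Fin n → ℝ := fun i => if i = j then 1 else min 1 (b i / (|a i| + 1)) with he
    set ε : ℝ := Finset.univ.inf' Finset.univ_nonempty e with hε
    have hεpos : 0 < ε := by
      rw [hε, Finset.lt_inf'_iff]
      intro i _
      simp only [he]
      split_ifs with h
      · norm_num
      · exact lt_min one_pos (div_pos (hbpos i h) (by positivity))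
    have hε1 : ε ≤ 1 := by
      have h1 : ε ≤ e j := Finset.inf'_le e (Finset.mem_univ j)
      rwa [show e j = 1 from by simp [he]] at h1
    have hεi : ∀ i, i ≠ j → ε ≤ b i / (|a i| + 1) := by
      intro i hi
      have h1 : ε ≤ e i := Finset.inf'_le e (Finset.mem_univ i)
      rw [show e i = min 1 (b i / (|a i| + 1)) from by simp [he, hi]] at h1
      exact le_trans h1 (min_le_right _ _)
    set t : EuclideanSpace ℝ (Fin 2) := s + ε • d with ht
    -- at t, x j is still farthest
    have hfar : ∀ i, ‖t - x i‖ ≤ ‖t - x j‖ := by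
      intro i
      rcases eq_or_ne i j with h | h
      · rw [h]
      · have hsq : ‖t - x i‖ ^ 2 < ‖t - x j‖ ^ 2 := by
          rw [ht, expand ε d i, expand ε d j]
          have hlin : ⟪s - x i, d⟫ - ⟪s - x j, d⟫ = -⟪x i - x j, d⟫ := by
            rw [← inner_sub_left, ← inner_neg_left]
            congr 1
            abel
          have h1 : ε * |a i| ≤ (b i / (|a i| + 1)) * |a i| :=
            mul_le_mul_of_nonneg_right (hεi i h) (abs_nonneg _)
          have h2 : (b i / (|a i| + 1)) * |a i| < b i := by
            rw [div_mul_eq_mul_div, div_lt_iff₀ (by positivity)]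
            nlinarith [hbpos i h, abs_nonneg (a i)]
          have h3 : ε * (-|a i|) ≤ ε * a i :=
            mul_le_mul_of_nonneg_left (neg_abs_le (a i)) hεpos.le
          have hgoal : 0 < b i + ε * a i := by
            clear_value ε b a
            nlinarith [h1, h2, h3]
          simp only [hb, ha] at hgoal
          have hlin2 : ε * (⟪s - x i, d⟫ - ⟪s - x j, d⟫) = ε * (-⟪x i - x j, d⟫) := by
            rw [hlin]
          nlinarith [hgoal, hlin2]
        exact le_of_pow_le_pow_left₀ two_ne_zero (norm_nonneg _) hsq.le
    have hPt : P t = (∑ i, ‖t - x i‖ ^ 2) + ‖t - x j‖ ^ 2 := by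
      rw [hP, supEq t hfar]
    -- the sum of inner products
    have hvec : (∑ i, (s - x i)) + (s - x j) = -(((n : ℝ) + 1) • d) := by
      have hMcj : ((n : ℝ) + 1) • Mc j = x j + ∑ i, x i := by
        rw [hMc j, smul_smul, mul_inv_cancel₀ hnp.ne', one_smul]
      have hsum : (∑ i, (s - x i)) = (n : ℝ) • s - ∑ i, x i := by
        rw [Finset.sum_sub_distrib, Finset.sum_const, Finset.card_univ, Fintype.card_fin,
          ← Nat.cast_smul_eq_nsmul ℝ]
      rw [hsum, hd, smul_sub, hMcj]
      module
    have hinner : (∑ i, ⟪s - x i, d⟫) + ⟪s - x j, d⟫ = -(((n : ℝ) + 1) * ‖d‖ ^ 2) := by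
      rw [← sum_inner, ← inner_add_left, hvec, inner_neg_left, real_inner_smul_left,
        real_inner_self_eq_norm_sq]
    -- P t < P s : contradiction
    have hsumt : (∑ i, ‖t - x i‖ ^ 2) =
        (∑ i, ‖s - x i‖ ^ 2) + 2 * ε * (∑ i, ⟪s - x i, d⟫) + (n : ℝ) * (ε ^ 2 * ‖d‖ ^ 2) := by
      rw [ht]
      rw [Finset.sum_congr rfl (fun i _ => expand ε d i)]
      rw [Finset.sum_add_distrib, Finset.sum_add_distrib, Finset.sum_const, Finset.card_univ,
        Fintype.card_fin, ← Finset.mul_sum, nsmul_eq_mul]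
    have hlt : P t < P s := by
      rw [hPt, hPs, hsumt, ht, expand ε d j]
      have h4 : ε * ((∑ i, ⟪s - x i, d⟫) + ⟪s - x j, d⟫) = ε * (-(((n : ℝ) + 1) * ‖d‖ ^ 2)) := by
        rw [hinner]
      nlinarith [h4, mul_pos (mul_pos hnp hεpos) hdpos, hε1, hεpos.le, hεpos, hdpos, hnp]
    exact absurd (hs t) (not_le.mpr hlt)
  refine ⟨key, fun i => ?_⟩
  rcases eq_or_ne i j with h | h
  · rw [h]
  -- algebraic part: from strict farthest at Mc j deduce farthest at M
  have hstr := hstrict i h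
  rw [key] at hstr
  set c : ℝ := ((n : ℝ) + 1)⁻¹ with hc
  have hcpos : 0 < c := by positivity
  have hc2 : 2 * c ≤ 1 := by
    rw [hc, inv_eq_one_div, mul_one_div, div_le_one hnp]
    linarith
  set u : EuclideanSpace ℝ (Fin 2) := M - x i with hu
  set v : EuclideanSpace ℝ (Fin 2) := x j - M with hv
  have hSx : (∑ k, x k) = (n : ℝ) • M := by
    rw [hM, smul_smul, mul_inv_cancel₀ hn0, one_smul]
  have h1 : Mc j - x i = u + c • v := by
    rw [hMc j, hSx, hu, hv, hc]
    match_scalars <;> field_simp <;> ring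
  have h2 : Mc j - x j = (c - 1) • v := by
    rw [hMc j, hSx, hv, hc]
    match_scalars <;> field_simp <;> ring
  rw [h1, h2] at hstr
  have hsq : ‖u + c • v‖ ^ 2 < ‖(c - 1) • v‖ ^ 2 :=
    pow_lt_pow_left₀ hstr (norm_nonneg _) two_ne_zero
  rw [norm_add_sq_real, real_inner_smul_right, norm_smul, norm_smul, Real.norm_eq_abs,
    Real.norm_eq_abs, mul_pow, mul_pow, sq_abs, sq_abs] at hsq
  have hcs : -(‖u‖ * ‖v‖) ≤ ⟪u, v⟫ := neg_le_of_abs_le (abs_real_inner_le_norm u v)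
  have hMj : ‖M - x j‖ = ‖v‖ := by rw [hv, ← norm_neg]; congr 1; abel
  rw [hMj]
  by_contra hlt
  push_neg at hlt
  have e1 : 0 ≤ c * (⟪u, v⟫ + ‖u‖ * ‖v‖) := mul_nonneg hcpos.le (by linarith)
  have e2 : 0 ≤ (1 - 2 * c) * (‖v‖ * (‖u‖ - ‖v‖)) :=
    mul_nonneg (by linarith) (mul_nonneg (norm_nonneg v) (by linarith))
  have e3 : 0 < ‖u‖ * (‖u‖ - ‖v‖) :=
    mul_pos (lt_of_le_of_lt (norm_nonneg v) hlt) (by linarith)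
  nlinarith [hsq, e1, e2, e3]
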